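/- arXiv:2306.17823 — 2 statements merged into one kernel-verified Lean document; each statement's English description precedes it below -/
import Mathlib

section
/- Let G be a group generated by elements s₀, …, s_g each satisfying s_i^p = 1 for a prime p, and let Γ ≤ G be the subgroup generated by the elements γ_{i,j} = s₀^{j−1} s_i s₀^{−j} for 0 ≤ i ≤ g and 1 ≤ j ≤ p−1. Then Γ is a normal subgroup of G and the quotient G/Γ is cyclic of order dividing p. -/
/-- If `G` is generated by `s₀, …, s_g` with `s_i^p = 1` (`p` prime), and `Γ` is the
subgroup generated by the `γ_{i,j} = s₀^(j-1) s_i s₀^(-j)` for `0 ≤ i ≤ g`,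
`1 ≤ j ≤ p - 1`, then `Γ` is normal in `G` and `G ⧸ Γ` is cyclic of order
dividing `p`. -/
theorem stmt_6 {G : Type*} [Group G] (p g : ℕ) (hp : p.Prime)
    (s : Fin (g + 1) → G) (hgen : Subgroup.closure (Set.range s) = ⊤)
    (hord : ∀ i, s i ^ p = 1)
    (Γ : Subgroup G)
    (hΓ : Γ = Subgroup.closure
      {x : G | ∃ (i : Fin (g + 1)) (j : ℕ), 1 ≤ j ∧ j ≤ p - 1 ∧
        x = s 0 ^ (j - 1) * s i * (s 0 ^ j)⁻¹}) :
    Γ.Normal ∧ ∀ hN : Γ.Normal,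
      letI := hN
      IsCyclic (G ⧸ Γ) ∧ Nat.card (G ⧸ Γ) ∣ p := by
  have hp2 : 2 ≤ p := hp.two_le
  have hp1 : 1 ≤ p - 1 := by omega
  set S : Set G := {x : G | ∃ (i : Fin (g + 1)) (j : ℕ), 1 ≤ j ∧ j ≤ p - 1 ∧
        x = s 0 ^ (j - 1) * s i * (s 0 ^ j)⁻¹} with hS
  -- powers facts
  have hs0p : s 0 ^ p = 1 := hord 0
  have hinvpow : ∀ i : Fin (g+1), s i ^ (p - 1) = (s i)⁻¹ := by
    intro i
    have : s i ^ (p - 1) * s i = 1 := by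
      rw [← pow_succ]
      have : p - 1 + 1 = p := by omega
      rw [this]; exact hord i
    exact eq_inv_of_mul_eq_one_left this
  -- Lemma A : telescoping product
  have hA : ∀ i : Fin (g+1), (s i)⁻¹ * s 0 ∈ Γ := by
    intro i
    have key : ∀ n, n ≤ p - 1 → s i ^ n * (s 0 ^ n)⁻¹ ∈ Γ := by
      intro n
      induction n with
      | zero => intro _; simpa using Γ.one_mem
      | succ n ih =>
        intro hn
        have h1 : s i ^ n * (s 0 ^ n)⁻¹ ∈ Γ := ih (by omega)
        have h2 : s 0 ^ n * s i * (s 0 ^ (n+1))⁻¹ ∈ Γ := by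
          rw [hΓ]
          apply Subgroup.subset_closure
          exact ⟨i, n+1, by omega, hn, by simp⟩
        have h3 := mul_mem h1 h2
        have he : s i ^ n * (s 0 ^ n)⁻¹ * (s 0 ^ n * s i * (s 0 ^ (n+1))⁻¹)
            = s i ^ (n+1) * (s 0 ^ (n+1))⁻¹ := by
          rw [pow_succ]; group
        rwa [he] at h3
    have h := key (p-1) le_rfl
    rwa [hinvpow i, hinvpow 0, inv_inv] at h
  have hA' : ∀ i : Fin (g+1), (s 0)⁻¹ * s i ∈ Γ := by
    intro i
    have := inv_mem (hA i)
    simpa [mul_inv_rev] using this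
  -- generator with j = 1
  have hG1 : ∀ i : Fin (g+1), s i * (s 0)⁻¹ ∈ Γ := by
    intro i
    rw [hΓ]
    apply Subgroup.subset_closure
    exact ⟨i, 1, le_rfl, hp1, by simp⟩
  -- conjugation by s 0 maps generators into Γ
  have hB : ∀ x ∈ S, s 0 * x * (s 0)⁻¹ ∈ Γ := by
    rintro x ⟨i, j, hj1, hj2, rfl⟩
    have he : s 0 * (s 0 ^ (j-1) * s i * (s 0 ^ j)⁻¹) * (s 0)⁻¹
        = s 0 ^ j * s i * (s 0 ^ (j+1))⁻¹ := by
      have h1 : s 0 * s 0 ^ (j-1) = s 0 ^ j := by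
        rw [← pow_succ']
        congr 1; omega
      rw [pow_succ, mul_inv_rev, ← h1]; group
    rw [he]
    rcases lt_or_eq_of_le hj2 with hlt | heq
    · rw [hΓ]
      apply Subgroup.subset_closure
      exact ⟨i, j+1, by omega, by omega, rfl⟩
    · subst heq
      have hj' : p - 1 + 1 = p := by omega
      rw [hj', hs0p, hinvpow 0]
      simpa using hA' i
  -- conjugation by (s 0)⁻¹ maps generators into Γ
  have hC : ∀ x ∈ S, (s 0)⁻¹ * x * s 0 ∈ Γ := by
    rintro x ⟨i, j, hj1, hj2, rfl⟩
    rcases eq_or_lt_of_le hj1 with heq | hlt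
    · subst heq
      have he : (s 0)⁻¹ * (s 0 ^ (1-1) * s i * (s 0 ^ 1)⁻¹) * s 0
          = (s 0)⁻¹ * s i := by
        simp only [Nat.sub_self, pow_zero, pow_one, one_mul]
        group
      rw [he]; exact hA' i
    · have he : (s 0)⁻¹ * (s 0 ^ (j-1) * s i * (s 0 ^ j)⁻¹) * s 0
          = s 0 ^ (j-2) * s i * (s 0 ^ (j-1))⁻¹ := by
        have h1 : s 0 ^ (j-1) = s 0 * s 0 ^ (j-2) := by
          rw [← pow_succ']; congr 1; omega
        have h2 : s 0 ^ j = s 0 ^ (j-1) * s 0 := by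
          rw [← pow_succ]; congr 1; omega
        rw [h1, h2, h1]; group
      rw [he, hΓ]
      apply Subgroup.subset_closure
      exact ⟨i, j-1, by omega, by omega, rfl⟩
  -- conjugation preserves Γ
  have hconj : ∀ x ∈ Γ, s 0 * x * (s 0)⁻¹ ∈ Γ := by
    intro x hx
    rw [hΓ] at hx
    induction hx using Subgroup.closure_induction with
    | mem y hy => exact hB y hy
    | one => simpa using Γ.one_mem
    | mul y z _ _ hy hz =>
      have := mul_mem hy hz
      have he : (s 0 * y * (s 0)⁻¹) * (s 0 * z * (s 0)⁻¹) = s 0 * (y*z) * (s 0)⁻¹ := by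
        group
      rwa [he] at this
    | inv y _ hy =>
      have := inv_mem hy
      have he : (s 0 * y * (s 0)⁻¹)⁻¹ = s 0 * y⁻¹ * (s 0)⁻¹ := by group
      rwa [he] at this
  have hconj' : ∀ x ∈ Γ, (s 0)⁻¹ * x * s 0 ∈ Γ := by
    intro x hx
    rw [hΓ] at hx
    induction hx using Subgroup.closure_induction with
    | mem y hy => exact hC y hy
    | one => simpa using Γ.one_mem
    | mul y z _ _ hy hz =>
      have := mul_mem hy hz
      have he : ((s 0)⁻¹ * y * s 0) * ((s 0)⁻¹ * z * s 0) = (s 0)⁻¹ * (y*z) * s 0 := by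
        group
      rwa [he] at this
    | inv y _ hy =>
      have := inv_mem hy
      have he : ((s 0)⁻¹ * y * s 0)⁻¹ = (s 0)⁻¹ * y⁻¹ * s 0 := by group
      rwa [he] at this
  -- s 0 in normalizer
  have hs0norm : s 0 ∈ Subgroup.normalizer (Γ : Set G) := by
    rw [Subgroup.mem_normalizer_iff]
    intro h
    constructor
    · intro hh; exact hconj h hh
    · intro hh
      have := hconj' _ hh
      have he : (s 0)⁻¹ * (s 0 * h * (s 0)⁻¹) * s 0 = h := by group
      rwa [he] at this
  have hnorm : ∀ i : Fin (g+1), s i ∈ Subgroup.normalizer (Γ : Set G) := by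
    intro i
    have h1 : s i * (s 0)⁻¹ ∈ Subgroup.normalizer (Γ : Set G) := Subgroup.le_normalizer (hG1 i)
    have h2 := mul_mem h1 hs0norm
    rwa [inv_mul_cancel_right] at h2
  have hNormal : Γ.Normal := by
    rw [← Subgroup.normalizer_eq_top_iff]
    rw [eq_top_iff, ← hgen, Subgroup.closure_le]
    rintro x ⟨i, rfl⟩
    exact hnorm i
  refine ⟨hNormal, fun hN => ?_⟩
  -- quotient part
  letI := hN
  set x0 : G ⧸ Γ := QuotientGroup.mk (s 0) with hx0
  have hmk : ∀ i : Fin (g+1), (QuotientGroup.mk (s i) : G ⧸ Γ) = x0 := by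
    intro i
    rw [hx0, QuotientGroup.eq]
    exact hA i
  have htop : Subgroup.zpowers x0 = ⊤ := by
    rw [eq_top_iff]
    have h1 : Subgroup.closure (Set.range s) ≤
        (Subgroup.zpowers x0).comap (QuotientGroup.mk' Γ) := by
      rw [Subgroup.closure_le]
      rintro x ⟨i, rfl⟩
      have hmem : (QuotientGroup.mk (s i) : G ⧸ Γ) ∈ Subgroup.zpowers x0 := by
        rw [hmk i]; exact Subgroup.mem_zpowers x0
      exact hmem
    rw [hgen] at h1
    intro y _
    obtain ⟨x, rfl⟩ := QuotientGroup.mk'_surjective Γ y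
    exact h1 (Subgroup.mem_top x)
  have hcyc : IsCyclic (G ⧸ Γ) := by
    refine ⟨⟨x0, fun y => ?_⟩⟩
    have hy : y ∈ (⊤ : Subgroup (G ⧸ Γ)) := Subgroup.mem_top y
    rwa [← htop] at hy
  refine ⟨hcyc, ?_⟩
  have hx0p : x0 ^ p = 1 := by
    rw [hx0, ← QuotientGroup.mk_pow, hord 0, QuotientGroup.mk_one]
  have hord0 : orderOf x0 ∣ p := orderOf_dvd_of_pow_eq_one hx0p
  have hcard : Nat.card (G ⧸ Γ) = orderOf x0 := by
    rw [← Nat.card_zpowers, htop]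
    exact (Nat.card_congr Subgroup.topEquiv.toEquiv).symm
  rw [hcard]
  exact hord0
end

section
/- Let p be a prime, g ≥ 1, and let G = C₀ ∗ C₁ ∗ ⋯ ∗ C_g be the free product of g+1 cyclic groups of order p with generators s₀, …, s_g. Let φ : G → ℤ/pℤ be the homomorphism sending each s_i to 1. Then the kernel of φ is a free group of rank (p − 1)g, and it is generated by the elements γ_{i,j} = s₀^{j−1} s_i s₀^{−j} for 1 ≤ i ≤ g and 1 ≤ j ≤ p − 1. -/
open Monoid Multiplicative


-- cyclic rotation lemma, generic
lemma cyc_step {Fg : Type*} [Group Fg] {m : ℕ} (d : ZMod (m + 1) → Fg) (x : ZMod (m + 1)) :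
    (List.ofFn fun t : Fin (m + 1) => d (x + 1 - (t : ℕ))).prod
      = d (x + 1) * (List.ofFn fun t : Fin (m + 1) => d (x - (t : ℕ))).prod * (d (x + 1))⁻¹ := by
  have h1 : (List.ofFn fun t : Fin (m + 1) => d (x + 1 - (t : ℕ))).prod
      = d (x + 1) * (List.ofFn fun t : Fin m => d (x - (t : ℕ))).prod := by
    rw [List.ofFn_succ]
    simp only [Fin.val_zero, Nat.cast_zero, sub_zero, Fin.val_succ, Nat.cast_add, Nat.cast_one,
      List.prod_cons]
    congr 1
    have he : (fun i : Fin m => d (x + 1 - ((i : ℕ) + 1))) = fun t : Fin m => d (x - (t : ℕ)) := by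
      funext t; congr 1; ring
    rw [he]
  have h2 : (List.ofFn fun t : Fin (m + 1) => d (x - (t : ℕ))).prod
      = (List.ofFn fun t : Fin m => d (x - (t : ℕ))).prod * d (x + 1) := by
    rw [List.ofFn_succ']
    simp only [List.concat_eq_append, List.prod_append, List.prod_cons, List.prod_nil,
      Fin.coe_castSucc, Fin.val_last, mul_one]
    apply congrArg
    have : ((m : ZMod (m + 1)) : ZMod (m+1)) = -1 := by
      have := ZMod.natCast_self (m + 1)
      push_cast at this
      linear_combination this
    have he : (fun i : Fin m => d (x - ((i:ℕ) : ZMod (m+1)))) = fun i : Fin m => d (x - (i:ℕ)) := rfl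
    rw [show x - ((m:ℕ) : ZMod (m+1)) = x + 1 by rw [this]; ring]
  rw [h1, h2]
  group

lemma cyc_all {Fg : Type*} [Group Fg] {m : ℕ} (d : ZMod (m + 1) → Fg)
    (h0 : (List.ofFn fun t : Fin (m + 1) => d (0 - (t : ℕ))).prod = 1) (x : ZMod (m + 1)) :
    (List.ofFn fun t : Fin (m + 1) => d (x - (t : ℕ))).prod = 1 := by
  have key : ∀ n : ℕ, (List.ofFn fun t : Fin (m + 1) => d ((n : ZMod (m + 1)) - (t : ℕ))).prod = 1 := by
    intro n
    induction n with
    | zero => simpa using h0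
    | succ n ih =>
      have := cyc_step d (n : ZMod (m + 1))
      push_cast
      rw [this, ih]
      group
  have : x = ((x.val : ℕ) : ZMod (m + 1)) := (ZMod.natCast_rightInverse x).symm
  rw [this]
  exact key x.val

namespace Stmt16Aux
variable (p g : ℕ)
abbrev B := ({i : Fin (g + 1) // i ≠ 0} × Fin (p - 1))
abbrev F' := FreeGroup (B p g)
abbrev A' := ZMod p → F' p g
def τ : Multiplicative (ZMod p) →* MulAut (A' p g) :=
  MonoidHom.mk' (fun k =>
    { toFun := fun f x => f (x - k.toAdd)
      invFun := fun f x => f (x + k.toAdd)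
      left_inv := fun f => by funext x; simp
      right_inv := fun f => by funext x; simp
      map_mul' := fun f h => rfl })
    (fun a b => by
      ext f x
      show f (x - (a.toAdd + b.toAdd)) = f (x - a.toAdd - b.toAdd)
      rw [sub_sub])
@[simp] lemma τ_apply (k : Multiplicative (ZMod p)) (f : A' p g) (x : ZMod p) :
    τ p g k f x = f (x - k.toAdd) := rfl
abbrev W := SemidirectProduct (A' p g) (Multiplicative (ZMod p)) (τ p g)
def Pfull (i : {i : Fin (g + 1) // i ≠ 0}) : F' p g :=
  (List.ofFn fun j : Fin (p - 1) => FreeGroup.of (i, j)).prod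
def cC (i : Fin (g + 1)) : A' p g := fun k =>
  if hi : i = 0 then 1
  else if hk : (-k).val < p - 1 then FreeGroup.of (⟨i, hi⟩, ⟨(-k).val, hk⟩)
  else (Pfull p g ⟨i, hi⟩)⁻¹
@[simp] lemma cC_zero : cC p g 0 = 1 := by funext k; simp [cC]
def eW (i : Fin (g + 1)) : W p g := ⟨cC p g i, ofAdd 1⟩
@[simp] lemma eW_right (i : Fin (g + 1)) : (eW p g i).right = ofAdd 1 := rfl

lemma eW_pow (i : Fin (g + 1)) (n : ℕ) :
    eW p g i ^ n = ⟨fun x => (List.ofFn fun t : Fin n => cC p g i (x - (t : ℕ))).prod,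
      ofAdd (n : ZMod p)⟩ := by
  induction n with
  | zero =>
    refine SemidirectProduct.ext (funext fun x => ?_) ?_
    · show (1 : F' p g) = (List.ofFn fun t : Fin 0 => cC p g i (x - (t : ℕ))).prod
      simp
    · show (1 : Multiplicative (ZMod p)) = ofAdd ((0 : ℕ) : ZMod p)
      simp
  | succ n ih =>
    rw [pow_succ', ih, eW, SemidirectProduct.mul_def]
    refine SemidirectProduct.ext (funext fun x => ?_) ?_
    · show cC p g i x * (List.ofFn fun t : Fin n => cC p g i (x - (1:ZMod p) - (t:ℕ))).prod
        = (List.ofFn fun t : Fin (n+1) => cC p g i (x - (t:ℕ))).prod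
      rw [List.ofFn_succ]
      simp only [List.prod_cons, Fin.val_zero, Nat.cast_zero, sub_zero, Fin.val_succ]
      apply congrArg
      have he : (fun t : Fin n => cC p g i (x - 1 - (t:ℕ))) = fun t : Fin n => cC p g i (x - ((t.succ : ℕ) : ZMod p)) := by
        funext t; congr 1; rw [Fin.val_succ]; push_cast; ring
      rw [he]; simp only [Fin.val_succ]
    · show ofAdd 1 * ofAdd (n : ZMod p) = ofAdd ((n + 1 : ℕ) : ZMod p)
      rw [← ofAdd_add]
      push_cast
      congr 1
      ring
end Stmt16Aux

namespace Stmt16Aux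
variable (p g : ℕ)

lemma cC_neg_coe (m g : ℕ) (i : Fin (g + 1)) (hi : i ≠ 0) (t : ℕ) (ht : t < m) :
    cC (m + 1) g i ((0 : ZMod (m + 1)) - (t : ℕ)) = FreeGroup.of (⟨i, hi⟩, ⟨t, ht⟩) := by
  have h1 : (-((0 : ZMod (m + 1)) - (t : ℕ))).val = t := by
    rw [neg_sub, sub_zero, ZMod.val_cast_of_lt (by omega)]
  rw [cC, dif_neg hi]
  rw [dif_pos (show (-((0 : ZMod (m+1)) - (t : ℕ))).val < m + 1 - 1 by rw [h1]; omega)]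
  congr 1
  exact Prod.ext rfl (Fin.ext h1)

attribute [local simp] Fin.eta

lemma cC_base (i : Fin (g + 1)) :
    (List.ofFn fun t : Fin p => cC p g i ((0 : ZMod p) - ((t : ℕ) : ZMod p))).prod = 1 := by
  rcases p with _ | m
  · simp
  by_cases hi : i = 0
  · subst hi
    rw [cC_zero]
    simp
  · rw [List.ofFn_succ']
    simp only [List.concat_eq_append, List.prod_append, List.prod_cons, List.prod_nil, mul_one]
    have hlast : cC (m + 1) g i ((0 : ZMod (m + 1)) - ((Fin.last m : ℕ) : ZMod (m + 1)))
        = (Pfull (m + 1) g ⟨i, hi⟩)⁻¹ := by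
      have h1 : (-((0 : ZMod (m + 1)) - ((m : ℕ) : ZMod (m + 1)))).val = m := by
        rw [neg_sub, sub_zero, ZMod.val_cast_of_lt (by omega)]
      rw [Fin.val_last, cC, dif_neg hi, dif_neg (by rw [h1]; omega)]
    have hrest : (fun t : Fin m => cC (m + 1) g i ((0 : ZMod (m + 1)) - ((t.castSucc : ℕ) : ZMod (m + 1))))
        = fun t : Fin m => FreeGroup.of ((⟨i, hi⟩, t) : B (m + 1) g) := by
      funext t
      rw [Fin.coe_castSucc, cC_neg_coe m g i hi t t.isLt]
      simp
    rw [hlast, hrest]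
    exact mul_inv_cancel _

lemma eW_pow_p (i : Fin (g + 1)) : eW p g i ^ p = 1 := by
  rw [eW_pow]
  refine SemidirectProduct.ext (funext fun x => ?_) ?_
  · show _ = (1 : F' p g)
    rcases p with _ | m
    · simp
    · exact cyc_all (cC (m + 1) g i) (cC_base (m + 1) g i) x
  · show ofAdd ((p : ℕ) : ZMod p) = (1 : Multiplicative (ZMod p))
    simp

end Stmt16Aux

namespace Stmt16Aux
open Monoid.CoprodI SemidirectProduct
variable (p g : ℕ)

abbrev G' := Monoid.CoprodI fun _ : Fin (g + 1) => Multiplicative (ZMod p)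

/-- the canonical generators -/
def σ (i : Fin (g + 1)) : G' p g := Monoid.CoprodI.of (i := i) (ofAdd (1 : ZMod p))

lemma mhom_ext [NeZero p] {M : Type*} [Monoid M] {f h : Multiplicative (ZMod p) →* M}
    (H : f (ofAdd 1) = h (ofAdd 1)) : f = h := by
  refine MonoidHom.ext fun m => ?_
  have hm : m = (ofAdd (1 : ZMod p)) ^ (m.toAdd.val) := by
    rw [← ofAdd_nsmul, nsmul_eq_mul, mul_one, ZMod.natCast_rightInverse m.toAdd, ofAdd_toAdd]
  rw [hm, map_pow, map_pow, H]

lemma pow_p_mod {M : Type*} [Monoid M] {x : M} (h : x ^ p = 1) (k : ℕ) :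
    x ^ (k % p) = x ^ k := by
  conv_rhs => rw [← Nat.div_add_mod k p, pow_add, pow_mul, h, one_pow, one_mul]

def fi [NeZero p] (i : Fin (g + 1)) : Multiplicative (ZMod p) →* W p g :=
  MonoidHom.mk' (fun m => eW p g i ^ m.toAdd.val)
    (fun a b => by
      show eW p g i ^ (a.toAdd + b.toAdd).val = _
      rw [ZMod.val_add, pow_p_mod p (eW_pow_p p g i), pow_add])

def ρ [NeZero p] : G' p g →* W p g := Monoid.CoprodI.lift (fi p g)

lemma ρ_σ (hp : 1 < p) [NeZero p] (i : Fin (g + 1)) : ρ p g (σ p g i) = eW p g i := by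
  haveI : Fact (1 < p) := ⟨hp⟩
  show Monoid.CoprodI.lift (fi p g) (Monoid.CoprodI.of _) = _
  rw [Monoid.CoprodI.lift_of]
  show eW p g i ^ (1 : ZMod p).val = _
  rw [ZMod.val_one p, pow_one]

def φ' : G' p g →* Multiplicative (ZMod p) :=
  Monoid.CoprodI.lift fun _ => MonoidHom.id (Multiplicative (ZMod p))

@[simp] lemma φ'_σ (i : Fin (g + 1)) : φ' p g (σ p g i) = ofAdd 1 := by
  rw [φ', σ, Monoid.CoprodI.lift_of]; rfl

lemma right_ρ (hp : 1 < p) [NeZero p] : rightHom.comp (ρ p g) = φ' p g := by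
  refine Monoid.CoprodI.ext_hom _ _ fun i => mhom_ext p ?_
  show rightHom (ρ p g (σ p g i)) = φ' p g (σ p g i)
  rw [ρ_σ p g hp, φ'_σ]
  rfl

/-- the free generators, as elements of `G'` -/
def γfun (b : B p g) : G' p g :=
  σ p g 0 ^ (b.2 : ℕ) * σ p g b.1.1 * (σ p g 0 ^ ((b.2 : ℕ) + 1))⁻¹

@[simp] lemma φ'_γfun (b : B p g) : φ' p g (γfun p g b) = 1 := by
  rw [γfun, map_mul, map_mul, map_inv, map_pow, map_pow, φ'_σ, φ'_σ, ← pow_succ, mul_inv_cancel]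

def ψ : F' p g →* G' p g := FreeGroup.lift (γfun p g)

lemma φ'ψ (w : F' p g) : φ' p g (ψ p g w) = 1 := by
  have h : (φ' p g).comp (ψ p g) = 1 := by
    refine FreeGroup.ext_hom _ _ fun b => ?_
    show φ' p g (ψ p g (FreeGroup.of b)) = 1
    rw [ψ, FreeGroup.lift_apply_of, φ'_γfun]
  exact DFunLike.congr_fun h w

lemma ρψ_right (hp : 1 < p) [NeZero p] (w : F' p g) : (ρ p g (ψ p g w)).right = 1 := by
  have := DFunLike.congr_fun (right_ρ p g hp) (ψ p g w)
  simp only [MonoidHom.comp_apply] at this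
  rw [show (rightHom (ρ p g (ψ p g w)) : Multiplicative (ZMod p)) = (ρ p g (ψ p g w)).right from rfl] at this
  rw [this, φ'ψ]

lemma eW_zero : eW p g 0 = inr (ofAdd 1) := by
  refine SemidirectProduct.ext ?_ rfl
  rw [show (eW p g 0).left = cC p g 0 from rfl, cC_zero]
  rfl

lemma ρ_γfun (hp : 1 < p) [NeZero p] (b : B p g) :
    ρ p g (γfun p g b) = ⟨(τ p g) (ofAdd ((b.2 : ℕ) : ZMod p)) (cC p g b.1.1), 1⟩ := by
  rw [γfun, map_mul, map_mul, map_inv, map_pow, map_pow, ρ_σ p g hp, ρ_σ p g hp, eW_zero,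
    ← map_pow (inr : _ →* W p g), ← map_pow (inr : _ →* W p g), ← map_inv (inr : _ →* W p g)]
  have h1 : ∀ a : Multiplicative (ZMod p), ∀ x : W p g,
      inr (φ := τ p g) a * x = ⟨(τ p g) a x.left, a * x.right⟩ := by
    intro a x
    refine SemidirectProduct.ext ?_ rfl
    show 1 * (τ p g) a x.left = _
    rw [one_mul]
  have h2 : ∀ x : W p g, ∀ a : Multiplicative (ZMod p),
      x * inr (φ := τ p g) a = ⟨x.left, x.right * a⟩ := by
    intro x a
    refine SemidirectProduct.ext ?_ rfl
    show x.left * (τ p g) x.right 1 = x.left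
    rw [map_one, mul_one]
  rw [h1, h2]
  refine SemidirectProduct.ext ?_ ?_
  · show (τ p g) ((ofAdd 1) ^ (b.2 : ℕ)) (eW p g b.1.1).left = _
    congr 1
    rw [← ofAdd_nsmul, nsmul_eq_mul, mul_one]
  · show (ofAdd 1) ^ (b.2 : ℕ) * (eW p g b.1.1).right * ((ofAdd (1 : ZMod p)) ^ ((b.2 : ℕ) + 1))⁻¹ = 1
    rw [eW_right, ← ofAdd_nsmul, ← ofAdd_nsmul]
    simp only [nsmul_eq_mul, mul_one, ← ofAdd_add, ← ofAdd_neg]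
    push_cast
    rw [show ((b.2 : ℕ) : ZMod p) + 1 + -(((b.2 : ℕ) : ZMod p) + 1) = 0 by ring]
    rfl

end Stmt16Aux

namespace Stmt16Aux
open Monoid.CoprodI SemidirectProduct
variable (p g : ℕ)

lemma cC_at (hp : 1 < p) (b : B p g) :
    cC p g b.1.1 (0 - ((b.2 : ℕ) : ZMod p)) = FreeGroup.of b := by
  obtain ⟨m, rfl⟩ : ∃ m, p = m + 1 := ⟨p - 1, by omega⟩
  rw [cC_neg_coe m g b.1.1 b.1.2 (b.2 : ℕ) b.2.isLt]

lemma ψ_inj (hp : 1 < p) [NeZero p] : Function.Injective (ψ p g) := by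
  have hΘmul : ∀ a b : F' p g, (ρ p g (ψ p g (a * b))).left 0
      = (ρ p g (ψ p g a)).left 0 * (ρ p g (ψ p g b)).left 0 := by
    intro a b
    rw [map_mul, map_mul, SemidirectProduct.mul_left, ρψ_right p g hp, map_one]
    rfl
  let Θ : F' p g →* F' p g := MonoidHom.mk' (fun w => (ρ p g (ψ p g w)).left 0) hΘmul
  have hΘ : Θ = MonoidHom.id _ := by
    refine FreeGroup.ext_hom _ _ fun b => ?_
    show (ρ p g (ψ p g (FreeGroup.of b))).left 0 = FreeGroup.of b
    rw [ψ, FreeGroup.lift_apply_of, ρ_γfun p g hp]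
    show cC p g b.1.1 (0 - toAdd (ofAdd ((b.2 : ℕ) : ZMod p))) = _
    rw [toAdd_ofAdd, cC_at p g hp]
  rw [injective_iff_map_eq_one]
  intro w hw
  have h2 : Θ w = w := by rw [hΘ]; rfl
  rw [← h2]
  show (ρ p g (ψ p g w)).left 0 = 1
  rw [hw, map_one]
  rfl

lemma σ_pow_p (i : Fin (g + 1)) : σ p g i ^ p = 1 := by
  rw [σ, ← map_pow, ← ofAdd_nsmul, nsmul_eq_mul, mul_one, ZMod.natCast_self, ofAdd_zero, map_one]

/-- the subgroup generated by the `γfun` -/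
abbrev H' : Subgroup (G' p g) := Subgroup.closure (Set.range (γfun p g))

lemma chain_mem (i : Fin (g + 1)) (hi : i ≠ 0) :
    ∀ n, n ≤ p - 1 → σ p g i ^ n * (σ p g 0 ^ n)⁻¹ ∈ H' p g := by
  intro n
  induction n with
  | zero => intro _; simpa using one_mem (H' p g)
  | succ n ih =>
    intro hn
    have key : σ p g i ^ (n + 1) * (σ p g 0 ^ (n + 1))⁻¹
        = (σ p g i ^ n * (σ p g 0 ^ n)⁻¹) * (σ p g 0 ^ n * σ p g i * (σ p g 0 ^ (n + 1))⁻¹) := by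
      group
    rw [key]
    refine mul_mem (ih (by omega)) (Subgroup.subset_closure ?_)
    exact ⟨(⟨i, hi⟩, ⟨n, by omega⟩), rfl⟩

lemma special_mem (hp : 1 < p) (i : Fin (g + 1)) (hi : i ≠ 0) :
    σ p g 0 ^ (p - 1) * σ p g i ∈ H' p g := by
  have h := inv_mem (chain_mem p g i hi (p - 1) le_rfl)
  have he : (σ p g i ^ (p - 1) * (σ p g 0 ^ (p - 1))⁻¹)⁻¹ = σ p g 0 ^ (p - 1) * σ p g i := by
    rw [mul_inv_rev, inv_inv]
    congr 1
    apply inv_eq_of_mul_eq_one_left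
    rw [← pow_succ', show p - 1 + 1 = p by omega, σ_pow_p]
  rwa [he] at h

lemma conj_mem (hp : 1 < p) (x : G' p g) (hx : x ∈ H' p g) :
    σ p g 0 * x * (σ p g 0)⁻¹ ∈ H' p g := by
  have hmap : ∀ b : B p g, σ p g 0 * γfun p g b * (σ p g 0)⁻¹ ∈ H' p g := by
    intro b
    have key : σ p g 0 * γfun p g b * (σ p g 0)⁻¹
        = σ p g 0 ^ ((b.2 : ℕ) + 1) * σ p g b.1.1 * (σ p g 0 ^ ((b.2 : ℕ) + 2))⁻¹ := by
      rw [γfun]; group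
    rw [key]
    by_cases hb : (b.2 : ℕ) + 1 < p - 1
    · exact Subgroup.subset_closure ⟨(b.1, ⟨(b.2 : ℕ) + 1, hb⟩), rfl⟩
    · have hb2 : (b.2 : ℕ) + 1 = p - 1 := by have := b.2.isLt; omega
      have hb3 : (b.2 : ℕ) + 2 = p := by omega
      rw [hb2, hb3, σ_pow_p, inv_one, mul_one]
      exact special_mem p g hp b.1.1 b.1.2
  let f := MulAut.conj (σ p g 0)
  have h1 : (H' p g).map f.toMonoidHom ≤ H' p g := by
    rw [MonoidHom.map_closure]
    refine Subgroup.closure_le _ |>.mpr ?_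
    rintro y ⟨x', ⟨b, rfl⟩, rfl⟩
    exact hmap b
  have h2 : f.toMonoidHom x ∈ (H' p g).map f.toMonoidHom := ⟨x, hx, rfl⟩
  have h3 := h1 h2
  simpa [f, MulAut.conj, div_eq_mul_inv, mul_assoc] using h3

lemma conj_pow_mem (hp : 1 < p) (a : ℕ) (x : G' p g) (hx : x ∈ H' p g) :
    σ p g 0 ^ a * x * (σ p g 0 ^ a)⁻¹ ∈ H' p g := by
  induction a with
  | zero => simpa using hx
  | succ a ih =>
    have key : σ p g 0 ^ (a + 1) * x * (σ p g 0 ^ (a + 1))⁻¹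
        = σ p g 0 * (σ p g 0 ^ a * x * (σ p g 0 ^ a)⁻¹) * (σ p g 0)⁻¹ := by group
    rw [key]
    exact conj_mem p g hp _ ih

lemma decomp (hp : 1 < p) [NeZero p] (x : G' p g) : ∃ k : ℕ, x * (σ p g 0 ^ k)⁻¹ ∈ H' p g := by
  have hmul : ∀ x y : G' p g, (∃ k, x * (σ p g 0 ^ k)⁻¹ ∈ H' p g) →
      (∃ k, y * (σ p g 0 ^ k)⁻¹ ∈ H' p g) → ∃ k, x * y * (σ p g 0 ^ k)⁻¹ ∈ H' p g := by
    rintro x y ⟨a, ha⟩ ⟨b, hb⟩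
    refine ⟨a + b, ?_⟩
    have key : x * y * (σ p g 0 ^ (a + b))⁻¹
        = (x * (σ p g 0 ^ a)⁻¹) * (σ p g 0 ^ a * (y * (σ p g 0 ^ b)⁻¹) * (σ p g 0 ^ a)⁻¹) := by
      rw [pow_add]; group
    rw [key]
    exact mul_mem ha (conj_pow_mem p g hp a _ hb)
  induction x using Monoid.CoprodI.induction_on with
  | one => exact ⟨0, by simpa using one_mem (H' p g)⟩
  | of i m =>
    have hσ : ∃ k, σ p g i * (σ p g 0 ^ k)⁻¹ ∈ H' p g := by
      by_cases hi : i = 0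
      · exact ⟨1, by subst hi; simpa using one_mem (H' p g)⟩
      · exact ⟨1, Subgroup.subset_closure ⟨(⟨i, hi⟩, ⟨0, by omega⟩), by simp [γfun]⟩⟩
    have hpow : ∀ n : ℕ, ∃ k, σ p g i ^ n * (σ p g 0 ^ k)⁻¹ ∈ H' p g := by
      intro n
      induction n with
      | zero => exact ⟨0, by simpa using one_mem (H' p g)⟩
      | succ n ih => exact pow_succ (σ p g i) n ▸ hmul _ _ ih hσ
    have hm : (Monoid.CoprodI.of (M := fun _ : Fin (g + 1) => Multiplicative (ZMod p)) (i := i) m)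
        = σ p g i ^ (toAdd m).val := by
      rw [show σ p g i = Monoid.CoprodI.of (M := fun _ : Fin (g + 1) => Multiplicative (ZMod p))
          (i := i) (ofAdd (1 : ZMod p)) from rfl, ← map_pow, ← ofAdd_nsmul, nsmul_eq_mul, mul_one,
        ZMod.natCast_rightInverse (toAdd m), ofAdd_toAdd]
    rw [hm]
    exact hpow _
  | mul x y hx hy => exact hmul x y hx hy

lemma ker_eq_H (hp : 1 < p) [NeZero p] : (φ' p g).ker = H' p g := by
  refine le_antisymm ?_ ?_
  · intro x hx
    obtain ⟨k, hk⟩ := decomp p g hp x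
    have hφk : φ' p g (x * (σ p g 0 ^ k)⁻¹) = 1 := by
      have : H' p g ≤ (φ' p g).ker := by
        refine Subgroup.closure_le _ |>.mpr ?_
        rintro y ⟨b, rfl⟩
        exact φ'_γfun p g b
      exact this hk
    rw [map_mul, map_inv, map_pow, φ'_σ] at hφk
    have hx1 : φ' p g x = 1 := hx
    rw [hx1, one_mul, inv_eq_one] at hφk
    have hdvd : p ∣ k := by
      have : ((k : ℕ) : ZMod p) = 0 := by
        have := congrArg toAdd hφk
        rw [← ofAdd_nsmul, nsmul_eq_mul, mul_one] at hφk
        exact ofAdd_eq_one.mp hφk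
      exact (ZMod.natCast_eq_zero_iff k p).mp this
    obtain ⟨c, rfl⟩ := hdvd
    rwa [pow_mul, σ_pow_p, one_pow, inv_one, mul_one] at hk
  · refine Subgroup.closure_le _ |>.mpr ?_
    rintro y ⟨b, rfl⟩
    exact φ'_γfun p g b

end Stmt16Aux

namespace Stmt16Aux
variable (p g : ℕ)

lemma range_γfun (hp : 1 < p) : Set.range (γfun p g)
    = {x | ∃ (i : Fin (g + 1)) (j : ℕ), i ≠ 0 ∧ 1 ≤ j ∧ j ≤ p - 1 ∧
        x = σ p g 0 ^ (j - 1) * σ p g i * (σ p g 0 ^ j)⁻¹} := by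
  ext x
  constructor
  · rintro ⟨b, rfl⟩
    refine ⟨b.1.1, (b.2 : ℕ) + 1, b.1.2, by omega, by have := b.2.isLt; omega, ?_⟩
    rw [γfun, Nat.add_sub_cancel]
  · rintro ⟨i, j, hi, hj1, hj2, rfl⟩
    refine ⟨(⟨i, hi⟩, ⟨j - 1, by omega⟩), ?_⟩
    rw [γfun]
    show σ p g 0 ^ (j - 1) * σ p g i * (σ p g 0 ^ ((j - 1) + 1))⁻¹ = _
    rw [show j - 1 + 1 = j by omega]

lemma card_B (hp : 1 < p) : Fintype.card (B p g) = (p - 1) * g := by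
  rw [Fintype.card_prod, Fintype.card_fin]
  have h1 : Fintype.card {i : Fin (g + 1) // i ≠ 0} = g := by
    rw [Fintype.card_subtype_compl, Fintype.card_subtype_eq, Fintype.card_fin]
    omega
  rw [h1, Nat.mul_comm]

end Stmt16Aux

/-- Let `G = C₀ ∗ ⋯ ∗ C_g` be the free product of `g + 1` cyclic groups of order `p`
(`p` prime) with generators `s₀, …, s_g`, and let `φ : G → ℤ/pℤ` send each `s_i` to
`1`.  Then `ker φ` is a free group of rank `(p - 1) g`, generated by the elements
`γ_{i,j} = s₀^(j-1) s_i s₀^(-j)` for `1 ≤ i ≤ g`, `1 ≤ j ≤ p - 1`. -/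
theorem stmt_16 (p g : ℕ) (hp : p.Prime) (hg : 1 ≤ g)
    (s : Fin (g + 1) → Monoid.CoprodI fun _ : Fin (g + 1) => Multiplicative (ZMod p))
    (hs : ∀ i, s i = Monoid.CoprodI.of (i := i) (Multiplicative.ofAdd (1 : ZMod p)))
    (φ : (Monoid.CoprodI fun _ : Fin (g + 1) => Multiplicative (ZMod p)) →*
      Multiplicative (ZMod p))
    (hφ : φ = Monoid.CoprodI.lift fun _ => MonoidHom.id (Multiplicative (ZMod p))) :
    Nonempty (φ.ker ≃* FreeGroup (Fin ((p - 1) * g))) ∧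
    φ.ker = Subgroup.closure
      {x | ∃ (i : Fin (g + 1)) (j : ℕ), i ≠ 0 ∧ 1 ≤ j ∧ j ≤ p - 1 ∧
        x = s 0 ^ (j - 1) * s i * (s 0 ^ j)⁻¹} := by
  haveI : NeZero p := ⟨hp.pos.ne'⟩
  have hp1 : 1 < p := hp.one_lt
  have hsσ : s = Stmt16Aux.σ p g := funext fun i => by rw [hs i]; rfl
  subst hsσ
  have hφ' : φ = Stmt16Aux.φ' p g := hφ
  subst hφ'
  constructor
  · have hrange : (Stmt16Aux.ψ p g).range = (Stmt16Aux.φ' p g).ker := by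
      rw [Stmt16Aux.ψ, FreeGroup.range_lift_eq_closure]
      exact (Stmt16Aux.ker_eq_H p g hp1).symm
    exact ⟨((MonoidHom.ofInjective (Stmt16Aux.ψ_inj p g hp1)).trans
      (MulEquiv.subgroupCongr hrange)).symm.trans
      (FreeGroup.freeGroupCongr (Fintype.equivFinOfCardEq (Stmt16Aux.card_B p g hp1)))⟩
  · rw [Stmt16Aux.ker_eq_H p g hp1]
    show Subgroup.closure (Set.range (Stmt16Aux.γfun p g)) = _
    rw [Stmt16Aux.range_γfun p g hp1]
end
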